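/- Let Ω be a nonempty set and S_Ω the free monoid on Ω, so that the variety of unary algebras with operations Ω is the variety of left S_Ω-acts. Then every automorphism of the category 𝒜_Ω⁰ of finitely generated free S_Ω-acts is inner if and only if Ω has exactly one element (i.e., the variety is the variety of mono-unary algebras). -/

import Mathlib

open CategoryTheory

/-- `f : S × X → S × Y` is a homomorphism of free left `S`-acts, where the action of
`S` on `S × X` is `s • (t, x) = (s * t, x)`. -/
def IsActHom (S : Type) [Monoid S] {X Y : Type} (f : S × X → S × Y) : Prop :=
  ∀ (s : S) (p : S × X), f (s * p.1, p.2) = (s * (f p).1, (f p).2)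

/-- Objects of the category `_S𝒜⁰` of finitely generated free left `S`-acts:
the free `S`-act on a finite set `X`, with carrier `S × X`. -/
structure FreeAct (S : Type) [Monoid S] : Type 1 where
  X : Type
  finX : Finite X

/-- The category `_S𝒜⁰`: morphisms are the `S`-equivariant maps. -/
instance (S : Type) [Monoid S] : Category (FreeAct S) where
  Hom A B := {f : S × A.X → S × B.X // IsActHom S f}
  id A := ⟨fun p => p, fun _ _ => rfl⟩
  comp f g := ⟨fun p => g.1 (f.1 p), fun s p => by
    show g.1 (f.1 (s * p.1, p.2)) = _; rw [f.2 s p]; exact g.2 s (f.1 p)⟩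

/-- An automorphism of a category `C`: a functor `C ⥤ C` admitting a functor `ψ` with
`φ ⋙ ψ` and `ψ ⋙ φ` equal (not merely isomorphic) to the identity functor. -/
def IsCatAutomorphism {C : Type*} [Category C] (φ : C ⥤ C) : Prop :=
  ∃ ψ : C ⥤ C, φ ⋙ ψ = 𝟭 C ∧ ψ ⋙ φ = 𝟭 C

namespace UnaryAux

section S
variable {S : Type} [Monoid S]

/-- The rank-one free act. -/
def U (S : Type) [Monoid S] : FreeAct S := ⟨PUnit, inferInstance⟩

lemma homext {A B : FreeAct S} {f g : A ⟶ B} (h : ∀ p, f.1 p = g.1 p) : f = g :=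
  Subtype.ext (funext h)

lemma comp_apply {A B C : FreeAct S} (f : A ⟶ B) (g : B ⟶ C) (p) :
    (f ≫ g).1 p = g.1 (f.1 p) := rfl

/-- The morphism `U S ⟶ A` sending the generator to `a`. -/
def fgen {A : FreeAct S} (a : S × A.X) : U S ⟶ A :=
  ⟨fun p => (p.1 * a.1, a.2), fun s p => by simp [mul_assoc]⟩

lemma fgen_apply {A : FreeAct S} (a : S × A.X) (p) : (fgen a).1 p = (p.1 * a.1, a.2) := rfl

lemma fgen_one {A : FreeAct S} (a : S × A.X) : (fgen a).1 (1, PUnit.unit) = a := by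
  cases a; simp [fgen]

lemma hom_from_U_eq {A : FreeAct S} (h : U S ⟶ A) : h = fgen (h.1 (1, PUnit.unit)) := by
  apply homext; intro p
  have hp := h.2 p.1 (1, PUnit.unit)
  rw [mul_one] at hp
  obtain ⟨s, u⟩ := p
  cases u
  exact hp

def rmul (s : S) : U S ⟶ U S := fgen (A := U S) (s, PUnit.unit)

lemma rmul_apply (s : S) (p) : (rmul s).1 p = (p.1 * s, PUnit.unit) := rfl

lemma endo_rmul (h : U S ⟶ U S) : h = rmul ((h.1 (1, PUnit.unit)).1) := hom_from_U_eq h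

lemma rmul_comp (s t : S) : rmul s ≫ rmul t = rmul (s * t) := by
  apply homext; intro p
  simp [comp_apply, rmul_apply, mul_assoc]
  show ((p.1 * s) * t, PUnit.unit) = _
  rw [mul_assoc]

lemma rmul_one : rmul (1 : S) = 𝟙 (U S) := by
  apply homext; intro p
  obtain ⟨s, u⟩ := p; cases u
  show (s * 1, PUnit.unit) = (s, PUnit.unit)
  rw [mul_one]

lemma rmul_inj {w w' : S} (h : rmul w = rmul w') : w = w' := by
  have h2 := congrArg (fun k => (k.1 (1, PUnit.unit)).1) h
  simpa [rmul_apply] using h2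

lemma fgen_smul {A : FreeAct S} (s : S) (a : S × A.X) :
    fgen (s * a.1, a.2) = rmul s ≫ fgen a := by
  apply homext; intro p
  simp [comp_apply, fgen_apply, rmul_apply, mul_assoc]
  show _ = ((p.1 * s) * a.1, a.2)
  rw [mul_assoc]

lemma fgen_comp {A B : FreeAct S} (a : S × A.X) (g : A ⟶ B) :
    fgen a ≫ g = fgen (g.1 a) := by
  apply homext; intro p
  exact g.2 p.1 a

/-- The inverse of a bijective act morphism is a morphism. -/
lemma exists_inverse {A B : FreeAct S} (f : A ⟶ B) (hbij : Function.Bijective f.1) :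
    ∃ g : B ⟶ A, f ≫ g = 𝟙 A ∧ g ≫ f = 𝟙 B := by
  let E := Equiv.ofBijective f.1 hbij
  have hE : ∀ x, f.1 (E.symm x) = x := fun x => E.apply_symm_apply x
  have hg : IsActHom S (E.symm : S × B.X → S × A.X) := by
    intro s p
    apply hbij.injective
    rw [f.2 s (E.symm p), hE, hE]
  refine ⟨⟨E.symm, hg⟩, ?_, ?_⟩
  · apply homext; intro p; exact E.symm_apply_apply p
  · apply homext; intro p; exact E.apply_symm_apply p

end S

section FM
variable {Ω : Type}

lemma list_eq_of_length [Subsingleton Ω] {x y : List Ω} (h : x.length = y.length) : x = y :=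
  List.ext_getElem h fun _ _ _ => Subsingleton.elim _ _

lemma fm_mul_comm [Subsingleton Ω] (x y : FreeMonoid Ω) : x * y = y * x := by
  apply FreeMonoid.toList.injective
  rw [FreeMonoid.toList_mul, FreeMonoid.toList_mul]
  exact list_eq_of_length (by simp [Nat.add_comm])

lemma fm_eq_one_of_mul_eq_one {w v : FreeMonoid Ω} (h : w * v = 1) : w = 1 := by
  have h2 := congrArg FreeMonoid.toList h
  rw [FreeMonoid.toList_mul] at h2
  simp only [FreeMonoid.toList_one, List.append_eq_nil_iff] at h2
  exact FreeMonoid.toList.injective (by simp [h2.1, FreeMonoid.toList_one])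

lemma fm_surj_id [Nonempty Ω] [Subsingleton Ω] (δ : FreeMonoid Ω → FreeMonoid Ω)
    (h1 : δ 1 = 1) (hm : ∀ x y, δ (x * y) = δ x * δ y) (hs : Function.Surjective δ)
    (x : FreeMonoid Ω) : δ x = x := by
  obtain ⟨a⟩ := ‹Nonempty Ω›
  have toList_pow : ∀ n, (FreeMonoid.of a ^ n).toList = List.replicate n a := by
    intro n; induction n with
    | zero => simp [FreeMonoid.toList_one]
    | succ n ih =>
        rw [pow_succ, FreeMonoid.toList_mul, ih, FreeMonoid.toList_of,
          ← List.replicate_succ']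
  have repr : ∀ y : FreeMonoid Ω, y = FreeMonoid.of a ^ y.toList.length := by
    intro y
    apply FreeMonoid.toList.injective
    rw [toList_pow]
    exact list_eq_of_length (by simp)
  have hpow : ∀ n, δ (FreeMonoid.of a ^ n) = (δ (FreeMonoid.of a)) ^ n := by
    intro n; induction n with
    | zero => simpa using h1
    | succ n ih => rw [pow_succ, hm, ih, pow_succ]
  have hlenpow : ∀ (w : FreeMonoid Ω) n, (w ^ n).toList.length = n * w.toList.length := by
    intro w n; induction n with
    | zero => simp [FreeMonoid.toList_one]
    | succ n ih => rw [pow_succ, FreeMonoid.toList_mul]; simp [ih]; ring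
  obtain ⟨z, hz⟩ := hs (FreeMonoid.of a)
  rw [repr z, hpow] at hz
  have hlen := congrArg (fun y : FreeMonoid Ω => y.toList.length) hz
  simp only [hlenpow, FreeMonoid.toList_of, List.length_singleton] at hlen
  have hone : (δ (FreeMonoid.of a)).toList.length = 1 := Nat.eq_one_of_mul_eq_one_left hlen
  have hda : δ (FreeMonoid.of a) = FreeMonoid.of a := by
    rw [repr (δ (FreeMonoid.of a)), hone, pow_one]
  conv_lhs => rw [repr x]
  rw [hpow]
  conv_lhs => rw [hda]
  exact (repr x).symm
end FM

end UnaryAux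

namespace UnaryAux
section Twist
variable {Ω : Type}

/-- The automorphism of the category of free acts induced by an involutive monoid
endomorphism `α` of `S`. -/
def twist (α : FreeMonoid Ω →* FreeMonoid Ω) (hinv : ∀ x, α (α x) = x) :
    FreeAct (FreeMonoid Ω) ⥤ FreeAct (FreeMonoid Ω) where
  obj A := A
  map {A B} f := ⟨fun p => (α (f.1 (α p.1, p.2)).1, (f.1 (α p.1, p.2)).2), by
    intro s p
    show (α (f.1 (α (s * p.1), p.2)).1, (f.1 (α (s * p.1), p.2)).2) = _
    rw [map_mul]
    rw [f.2 (α s) (α p.1, p.2)]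
    simp only [map_mul, hinv]⟩
  map_id A := by
    apply homext; intro p
    show (α (α p.1), p.2) = p
    rw [hinv]
  map_comp {A B C} f g := by
    apply homext; intro p
    show (α (g.1 (f.1 (α p.1, p.2))).1, (g.1 (f.1 (α p.1, p.2))).2) = _
    show _ = (α (g.1 (α (α (f.1 (α p.1, p.2)).1), (f.1 (α p.1, p.2)).2)).1,
      (g.1 (α (α (f.1 (α p.1, p.2)).1), (f.1 (α p.1, p.2)).2)).2)
    rw [hinv]

lemma twist_map_apply (α : FreeMonoid Ω →* FreeMonoid Ω) (hinv : ∀ x, α (α x) = x)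
    {A B : FreeAct (FreeMonoid Ω)} (f : A ⟶ B) (p) :
    ((twist α hinv).map f).1 p = (α (f.1 (α p.1, p.2)).1, (f.1 (α p.1, p.2)).2) := rfl

lemma twist_invol (α : FreeMonoid Ω →* FreeMonoid Ω) (hinv : ∀ x, α (α x) = x) :
    twist α hinv ⋙ twist α hinv = 𝟭 (FreeAct (FreeMonoid Ω)) := by
  refine CategoryTheory.Functor.ext (fun A => rfl) (fun A B f => ?_)
  simp only [Functor.comp_map, Functor.id_map, eqToHom_refl, Category.comp_id,
    Category.id_comp]
  apply homext; intro p
  show (α (α (f.1 ((α (α p.1), p.2))).1), (f.1 ((α (α p.1), p.2))).2) = f.1 p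
  rw [hinv, hinv]
  rfl

lemma twist_auto (α : FreeMonoid Ω →* FreeMonoid Ω) (hinv : ∀ x, α (α x) = x) :
    IsCatAutomorphism (twist α hinv) :=
  ⟨twist α hinv, twist_invol α hinv, twist_invol α hinv⟩

lemma twist_map_rmul (α : FreeMonoid Ω →* FreeMonoid Ω) (hinv : ∀ x, α (α x) = x)
    (s : FreeMonoid Ω) :
    (twist α hinv).map (rmul s) = rmul (α s) := by
  apply homext; intro p
  rw [twist_map_apply]
  show (α (α p.1 * s), PUnit.unit) = ((rmul (α s)).1 p)
  rw [map_mul, hinv]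
  rfl

/-- If all automorphisms are inner, then involutive monoid endomorphisms fix
everything of the form needed. -/
lemma twist_not_inner {α : FreeMonoid Ω →* FreeMonoid Ω} {hinv : ∀ x, α (α x) = x}
    (η : twist α hinv ≅ 𝟭 (FreeAct (FreeMonoid Ω))) (s : FreeMonoid Ω) : α s = s := by
  set U' := U (FreeMonoid Ω)
  have hw : η.hom.app U' = rmul ((η.hom.app U').1 (1, PUnit.unit)).1 :=
    endo_rmul (η.hom.app U')
  set w := ((η.hom.app U').1 (1, PUnit.unit)).1 with hwdef
  have hv : η.inv.app U' = rmul ((η.inv.app U').1 (1, PUnit.unit)).1 :=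
    endo_rmul (η.inv.app U')
  set v := ((η.inv.app U').1 (1, PUnit.unit)).1 with hvdef
  have hid : η.hom.app U' ≫ η.inv.app U' = 𝟙 U' := η.hom_inv_id_app U'
  erw [hw, hv, rmul_comp, ← rmul_one] at hid
  have hwv : w * v = 1 := rmul_inj hid
  have hw1 : w = 1 := fm_eq_one_of_mul_eq_one hwv
  have hnat := η.hom.naturality (X := U') (Y := U') (rmul s)
  erw [Functor.id_map, twist_map_rmul, hw, hw1, rmul_comp, rmul_comp] at hnat
  have := rmul_inj hnat
  simpa using this
end Twist
end UnaryAux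

namespace UnaryAux
section Inner
variable {Ω : Type}

lemma inner_of_subsingleton [Nonempty Ω] [Subsingleton Ω]
    (φ : FreeAct (FreeMonoid Ω) ⥤ FreeAct (FreeMonoid Ω)) (hφ : IsCatAutomorphism φ) :
    Nonempty (φ ≅ 𝟭 (FreeAct (FreeMonoid Ω))) := by
  obtain ⟨ψ, h1, h2⟩ := hφ
  let e : FreeAct (FreeMonoid Ω) ≌ FreeAct (FreeMonoid Ω) :=
    CategoryTheory.Equivalence.mk φ ψ (eqToIso h1.symm) (eqToIso h2)
  haveI : φ.IsEquivalence := e.isEquivalence_functor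
  have hfull : ∀ {A B : FreeAct (FreeMonoid Ω)} (g : φ.obj A ⟶ φ.obj B),
      ∃ f : A ⟶ B, φ.map f = g := fun g => φ.map_surjective g
  have hfaith : ∀ {A B : FreeAct (FreeMonoid Ω)} {f g : A ⟶ B},
      φ.map f = φ.map g → f = g := fun h => φ.map_injective h
  -- the carrier of `φ.obj U` is nonempty
  have hne : Nonempty ((φ.obj (U (FreeMonoid Ω))).X) := by
    by_contra hN
    haveI : IsEmpty ((φ.obj (U (FreeMonoid Ω))).X) := not_nonempty_iff.mp hN
    obtain ⟨f, -⟩ := hfull (A := U (FreeMonoid Ω)) (B := ⟨PEmpty, inferInstance⟩)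
      ⟨fun p => isEmptyElim p.2, fun s p => isEmptyElim p.2⟩
    exact (f.1 (1, PUnit.unit)).2.elim
  -- the carrier of `φ.obj U` is a subsingleton, since `End U` is commutative
  have hsub : ∀ y z : (φ.obj (U (FreeMonoid Ω))).X, y = z := by
    intro y z
    by_contra hyz
    obtain ⟨f', hf'⟩ := hfull (A := U (FreeMonoid Ω)) (B := U (FreeMonoid Ω))
      ⟨fun p => (p.1, y), fun s p => rfl⟩
    obtain ⟨g', hg'⟩ := hfull (A := U (FreeMonoid Ω)) (B := U (FreeMonoid Ω))
      ⟨fun p => (p.1, z), fun s p => rfl⟩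
    have hcomm : f' ≫ g' = g' ≫ f' := by
      rw [endo_rmul f', endo_rmul g', rmul_comp, rmul_comp, fm_mul_comm]
    have h3 := congrArg φ.map hcomm
    rw [φ.map_comp, φ.map_comp, hf', hg'] at h3
    have h4 : z = y := congrArg (fun k => (k.1 ((1 : FreeMonoid Ω), y)).2) h3
    exact hyz h4.symm
  obtain ⟨u0⟩ := hne
  let θhom : U (FreeMonoid Ω) ⟶ φ.obj (U (FreeMonoid Ω)) :=
    ⟨fun p => (p.1, u0), fun s p => rfl⟩
  let θinv : φ.obj (U (FreeMonoid Ω)) ⟶ U (FreeMonoid Ω) :=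
    ⟨fun p => (p.1, PUnit.unit), fun s p => rfl⟩
  have hptA : ∀ x, θinv.1 (θhom.1 x) = x := fun x => by
    obtain ⟨s, u⟩ := x; cases u; rfl
  have hptB : ∀ x, θhom.1 (θinv.1 x) = x := fun x => by
    obtain ⟨s, u⟩ := x
    show (s, u0) = (s, u)
    rw [hsub u0 u]
  have θ1 : θhom ≫ θinv = 𝟙 (U (FreeMonoid Ω)) := homext fun p => hptA p
  -- the induced endomorphism of the monoid S
  have hδex : ∀ s : FreeMonoid Ω, ∃ w, θhom ≫ φ.map (rmul s) ≫ θinv = rmul w := fun s =>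
    ⟨_, endo_rmul _⟩
  choose δ hes using hδex
  have hδ1 : δ 1 = 1 := by
    apply rmul_inj
    rw [← hes 1, rmul_one, φ.map_id, Category.id_comp, θ1]
  have hδm : ∀ s t, δ (s * t) = δ s * δ t := by
    intro s t
    apply rmul_inj
    rw [← rmul_comp, ← hes s, ← hes t, ← hes (s * t), ← rmul_comp, φ.map_comp]
    apply homext; intro p
    show θinv.1 ((φ.map (rmul t)).1 ((φ.map (rmul s)).1 (θhom.1 p)))
        = θinv.1 ((φ.map (rmul t)).1 (θhom.1 (θinv.1 ((φ.map (rmul s)).1 (θhom.1 p)))))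
    rw [hptB]
  have hδsurj : Function.Surjective δ := by
    intro t
    obtain ⟨h, hh⟩ := hfull (A := U (FreeMonoid Ω)) (B := U (FreeMonoid Ω))
      (θinv ≫ rmul t ≫ θhom)
    refine ⟨(h.1 (1, PUnit.unit)).1, ?_⟩
    apply rmul_inj
    rw [← hes ((h.1 (1, PUnit.unit)).1), ← endo_rmul h, hh]
    apply homext; intro p
    show θinv.1 (θhom.1 ((rmul t).1 (θinv.1 (θhom.1 p)))) = (rmul t).1 p
    rw [hptA, hptA]
  have hδid : ∀ s, δ s = s := fm_surj_id δ hδ1 hδm hδsurj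
  have hes' : ∀ s, θhom ≫ φ.map (rmul s) ≫ θinv = rmul s := fun s => by
    rw [hes s, hδid s]
  have key : ∀ (s : FreeMonoid Ω) p, (φ.map (rmul s)).1 (θhom.1 p) = θhom.1 ((rmul s).1 p) := by
    intro s p
    have h3 : θinv.1 ((φ.map (rmul s)).1 (θhom.1 p)) = (rmul s).1 p :=
      congrArg (fun k => k.1 p) (hes' s)
    have h4 : θhom.1 (θinv.1 ((φ.map (rmul s)).1 (θhom.1 p))) = θhom.1 ((rmul s).1 p) :=
      congrArg θhom.1 h3
    rwa [hptB] at h4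
  -- the components of the natural isomorphism
  have βact : ∀ (A : FreeAct (FreeMonoid Ω)),
      IsActHom (FreeMonoid Ω) (fun a : FreeMonoid Ω × A.X =>
        (θhom ≫ φ.map (fgen a)).1 (1, PUnit.unit)) := by
    intro A s p
    calc (θhom ≫ φ.map (fgen (s * p.1, p.2))).1 (1, PUnit.unit)
        = (φ.map (fgen p)).1 ((φ.map (rmul s)).1 (θhom.1 (1, PUnit.unit))) := by
          rw [fgen_smul s p, φ.map_comp]; rfl
      _ = (φ.map (fgen p)).1 (θhom.1 ((rmul s).1 (1, PUnit.unit))) := by rw [key]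
      _ = (θhom ≫ φ.map (fgen p)).1 (s * 1, PUnit.unit) := by
          show (φ.map (fgen p)).1 (θhom.1 (1 * s, PUnit.unit))
              = (θhom ≫ φ.map (fgen p)).1 (s * 1, PUnit.unit)
          rw [one_mul, mul_one]
          rfl
      _ = (s * ((θhom ≫ φ.map (fgen p)).1 (1, PUnit.unit)).1,
           ((θhom ≫ φ.map (fgen p)).1 (1, PUnit.unit)).2) :=
          (θhom ≫ φ.map (fgen p)).2 s (1, PUnit.unit)
  let β : ∀ A : FreeAct (FreeMonoid Ω), A ⟶ φ.obj A := fun A =>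
    ⟨fun a => (θhom ≫ φ.map (fgen a)).1 (1, PUnit.unit), βact A⟩
  have βbij : ∀ A, Function.Bijective (β A).1 := by
    intro A
    constructor
    · intro a b hab2
      have hA : θhom ≫ φ.map (fgen a) = θhom ≫ φ.map (fgen b) := by
        rw [hom_from_U_eq (θhom ≫ φ.map (fgen a)), hom_from_U_eq (θhom ≫ φ.map (fgen b))]
        exact congrArg fgen hab2
      have hB : φ.map (fgen a) = φ.map (fgen b) := by
        apply homext; intro p
        have h5 : (φ.map (fgen a)).1 (θhom.1 (θinv.1 p))
            = (φ.map (fgen b)).1 (θhom.1 (θinv.1 p)) :=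
          congrArg (fun k => k.1 (θinv.1 p)) hA
        rwa [hptB] at h5
      have h6 : (fgen a).1 ((1 : FreeMonoid Ω), PUnit.unit)
          = (fgen b).1 ((1 : FreeMonoid Ω), PUnit.unit) :=
        congrArg (fun k => k.1 (1, PUnit.unit)) (hfaith hB)
      rw [fgen_one, fgen_one] at h6
      exact h6
    · intro b
      obtain ⟨h, hh⟩ := hfull (A := U (FreeMonoid Ω)) (B := A) (θinv ≫ fgen b)
      refine ⟨h.1 (1, PUnit.unit), ?_⟩
      show (θhom ≫ φ.map (fgen (h.1 (1, PUnit.unit)))).1 (1, PUnit.unit) = b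
      rw [← hom_from_U_eq h, hh]
      show (fgen b).1 (θinv.1 (θhom.1 (1, PUnit.unit))) = b
      rw [hptA]
      exact fgen_one b
  have βnat : ∀ {A B : FreeAct (FreeMonoid Ω)} (g : A ⟶ B), g ≫ β B = β A ≫ φ.map g := by
    intro A B g
    apply homext; intro a
    show (θhom ≫ φ.map (fgen (g.1 a))).1 (1, PUnit.unit) = _
    rw [← fgen_comp a g, φ.map_comp]
    rfl
  have βiso : ∀ A, ∃ γ : φ.obj A ⟶ A, β A ≫ γ = 𝟙 A ∧ γ ≫ β A = 𝟙 (φ.obj A) :=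
    fun A => exists_inverse (β A) (βbij A)
  choose γ hγ1 hγ2 using βiso
  refine ⟨NatIso.ofComponents (C := FreeAct (FreeMonoid Ω)) (F := φ) (G := 𝟭 _)
    (fun A => ⟨γ A, β A, hγ2 A, hγ1 A⟩) (fun {A B} g => ?_)⟩
  show φ.map g ≫ γ B = γ A ≫ (𝟭 (FreeAct (FreeMonoid Ω))).map g
  simp only [Functor.id_map]
  have h7 := βnat g
  calc φ.map g ≫ γ B = (γ A ≫ β A) ≫ φ.map g ≫ γ B := by rw [hγ2 A, Category.id_comp]
    _ = γ A ≫ (β A ≫ φ.map g) ≫ γ B := by simp only [Category.assoc]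
    _ = γ A ≫ (g ≫ β B) ≫ γ B := by rw [← h7]
    _ = γ A ≫ g ≫ (β B ≫ γ B) := by simp only [Category.assoc]
    _ = γ A ≫ g := by rw [hγ1 B, Category.comp_id]
end Inner
end UnaryAux


open UnaryAux in
/-- **Corollary 9, second part.** Let `Ω` be a nonempty set and `S_Ω` the
free monoid on `Ω`, so that the variety of unary algebras with operations `Ω` is the
variety of left `S_Ω`-acts. Then every automorphism of the category `𝒜_Ω⁰` of finitely
generated free `S_Ω`-acts is inner iff `Ω` has exactly one element. -/
theorem unary_perfect_iff_monounary (Ω : Type) [Nonempty Ω] :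
    (∀ φ : FreeAct (FreeMonoid Ω) ⥤ FreeAct (FreeMonoid Ω), IsCatAutomorphism φ →
        Nonempty (φ ≅ 𝟭 (FreeAct (FreeMonoid Ω)))) ↔
      Subsingleton Ω := by
  constructor
  · intro H
    by_contra hns
    rw [not_subsingleton_iff_nontrivial] at hns
    obtain ⟨a, b, hab⟩ := hns.exists_pair_ne
    haveI : DecidableEq Ω := Classical.decEq Ω
    set σ : Ω ≃ Ω := Equiv.swap a b with hσ
    set α : FreeMonoid Ω →* FreeMonoid Ω := FreeMonoid.map σ with hα
    have hinv : ∀ x, α (α x) = x := by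
      intro x
      apply FreeMonoid.toList.injective
      rw [hα]
      rw [FreeMonoid.toList_map, FreeMonoid.toList_map, List.map_map]
      have hcc : ⇑σ ∘ ⇑σ = id := funext fun c => Equiv.swap_apply_self a b c
      rw [hcc, List.map_id]
    obtain ⟨η⟩ := H (twist α hinv) (twist_auto α hinv)
    have h8 := twist_not_inner η (FreeMonoid.of a)
    rw [hα, FreeMonoid.map_of] at h8
    have h9 : σ a = a := FreeMonoid.of_injective h8
    rw [hσ, Equiv.swap_apply_left] at h9
    exact hab h9.symm
  · intro hsub φ hφ
    haveI := hsub
    exact inner_of_subsingleton φ hφ
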